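/- arXiv:1302.6763 — 3 statements merged into one kernel-verified Lean document; each statement's English description precedes it below -/
import Mathlib

section
/- An integer vector x = (x₁,…,x₆) ∈ ℤ⁶ satisfies χ(x) = 0 if and only if there exist integers a, b with x = a·h₀ + b·h∞. In other words, the radical rad(χ) = {x ∈ ℤ⁶ : χ(x) = 0} equals {a·h₀ + b·h∞ : a, b ∈ ℤ}. -/
/-- The quadratic form of the tubular algebra C(4,λ). -/
def chi (x : Fin 6 → ℚ) : ℚ :=
  (1/2) * (x 0 - x 1)^2 + (x 2 - (1/2) * (x 0 + x 1 + x 3 + x 4))^2 +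
    (1/2) * (x 3 - x 4)^2 + (x 5 + (1/2) * (x 0 + x 1 - x 3 - x 4))^2

def hZero : Fin 6 → ℤ := ![1, 1, 2, 1, 1, 0]

def hInfty : Fin 6 → ℤ := ![0, 0, 1, 1, 1, 1]

lemma hZ5 : (![1, 1, 2, 1, 1, 0] : Fin 6 → ℤ) 5 = 0 := rfl
lemma hI5 : (![0, 0, 1, 1, 1, 1] : Fin 6 → ℤ) 5 = 1 := rfl

/-- Lemma 4.1 for C(4,λ): rad(χ) = {a·hZero + b·hInfty : a, b ∈ ℤ}. -/
theorem stmt_2 (x : Fin 6 → ℤ) :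
    chi (fun i => (x i : ℚ)) = 0 ↔ ∃ a b : ℤ, x = fun i => a * hZero i + b * hInfty i := by
  constructor
  · intro h
    simp only [chi] at h
    have s1 := sq_nonneg ((x 0 : ℚ) - (x 1 : ℚ))
    have s2 := sq_nonneg ((x 2 : ℚ) - (1/2) * ((x 0 : ℚ) + (x 1 : ℚ) + (x 3 : ℚ) + (x 4 : ℚ)))
    have s3 := sq_nonneg ((x 3 : ℚ) - (x 4 : ℚ))
    have s4 := sq_nonneg ((x 5 : ℚ) + (1/2) * ((x 0 : ℚ) + (x 1 : ℚ) - (x 3 : ℚ) - (x 4 : ℚ)))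
    have t1 : ((x 0 : ℚ) - (x 1 : ℚ))^2 = 0 := by linarith
    have t2 : ((x 2 : ℚ) - (1/2) * ((x 0 : ℚ) + (x 1 : ℚ) + (x 3 : ℚ) + (x 4 : ℚ)))^2 = 0 := by linarith
    have t3 : ((x 3 : ℚ) - (x 4 : ℚ))^2 = 0 := by linarith
    have t4 : ((x 5 : ℚ) + (1/2) * ((x 0 : ℚ) + (x 1 : ℚ) - (x 3 : ℚ) - (x 4 : ℚ)))^2 = 0 := by linarith
    have u1 : (x 0 : ℚ) - (x 1 : ℚ) = 0 := by exact pow_eq_zero_iff (by norm_num) |>.mp t1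
    have u2 : (x 2 : ℚ) - (1/2) * ((x 0 : ℚ) + (x 1 : ℚ) + (x 3 : ℚ) + (x 4 : ℚ)) = 0 := by
      exact pow_eq_zero_iff (by norm_num) |>.mp t2
    have u3 : (x 3 : ℚ) - (x 4 : ℚ) = 0 := by exact pow_eq_zero_iff (by norm_num) |>.mp t3
    have u4 : (x 5 : ℚ) + (1/2) * ((x 0 : ℚ) + (x 1 : ℚ) - (x 3 : ℚ) - (x 4 : ℚ)) = 0 := by
      exact pow_eq_zero_iff (by norm_num) |>.mp t4
    have e1 : (x 0 : ℚ) = (x 1 : ℚ) := by linarith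
    have e2 : (x 3 : ℚ) = (x 4 : ℚ) := by linarith
    have e3 : (x 2 : ℚ) = (x 0 : ℚ) + (x 3 : ℚ) := by linarith
    have e4 : (x 5 : ℚ) = (x 3 : ℚ) - (x 0 : ℚ) := by linarith
    have i1 : x 1 = x 0 := by exact_mod_cast e1.symm
    have i2 : x 4 = x 3 := by exact_mod_cast e2.symm
    have i3 : x 2 = x 0 + x 3 := by exact_mod_cast e3
    have i4 : x 5 = x 3 - x 0 := by exact_mod_cast e4
    refine ⟨x 0, x 3 - x 0, ?_⟩
    funext i
    fin_cases i <;> simp [hZero, hInfty, Matrix.cons_val_zero, Matrix.cons_val_one, Matrix.head_cons, Matrix.cons_val_succ, hZ5, hI5, i1, i2, i3, i4] <;> ring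
  · rintro ⟨a, b, rfl⟩
    simp only [chi, hZero, hInfty]
    norm_num [Matrix.cons_val_zero, Matrix.cons_val_one, Matrix.head_cons, Matrix.cons_val_succ, hZ5, hI5]
    push_cast
    ring
end

section
/- Every x ∈ ℤ⁶ with χ(x) = 1 may be written in the form x = a·h₀ + b·h∞ + y with a, b ∈ ℤ and y ∈ Ω, i.e. with y ∈ ℤ⁶ satisfying χ(y) = 1 and y₅ = y₆ = 0. -/
/-- Lemma 4.4 for C(4,λ): every x with χ(x) = 1 is a·hZero + b·hInfty + y with y ∈ Ω. -/
theorem stmt_5 (x : Fin 6 → ℤ) (hx : chi (fun i => (x i : ℚ)) = 1) :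
    ∃ (a b : ℤ) (y : Fin 6 → ℤ), chi (fun i => (y i : ℚ)) = 1 ∧ y 4 = 0 ∧ y 5 = 0 ∧
      x = fun i => a * hZero i + b * hInfty i + y i := by
  have e0 : hZero 0 = 1 := rfl
  have e1 : hZero 1 = 1 := rfl
  have e2 : hZero 2 = 2 := rfl
  have e3 : hZero 3 = 1 := rfl
  have e4 : hZero 4 = 1 := rfl
  have e5 : hZero 5 = 0 := rfl
  have f0 : hInfty 0 = 0 := rfl
  have f1 : hInfty 1 = 0 := rfl
  have f2 : hInfty 2 = 1 := rfl
  have f3 : hInfty 3 = 1 := rfl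
  have f4 : hInfty 4 = 1 := rfl
  have f5 : hInfty 5 = 1 := rfl
  refine ⟨x 4 - x 5, x 5, fun i => x i - (x 4 - x 5) * hZero i - x 5 * hInfty i, ?_, ?_, ?_, ?_⟩
  · simp only [chi, e0, e1, e2, e3, e4, e5, f0, f1, f2, f3, f4, f5] at hx ⊢
    push_cast
    linear_combination hx
  · simp only [e4, f4]; ring
  · simp only [e5, f5]; ring
  · funext i; ring
end

section
/- Let p and q be positive integers, let r be a positive irrational real number, let k be a natural number and let ε > 0 be real. Then there exist natural numbers a, b with a ≥ 1 such that r − ε < b/a < r and such that for all natural numbers a', b' with a' ≥ 1: if b/a < b'/a' < r then a'·p + b'·q > a·p + b·q + k. -/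
noncomputable def ff (r : ℝ) (m : ℕ) : ℝ := (⌊(m : ℝ) * r⌋ : ℝ) / m

lemma ff_ge (r : ℝ) {a' b' : ℕ} (ha' : 1 ≤ a') (h : (b' : ℝ) / a' < r) :
    (b' : ℝ) / a' ≤ ff r a' := by
  have ha'0 : (0:ℝ) < a' := by exact_mod_cast ha'
  have hb : (b' : ℝ) < a' * r := by
    rw [div_lt_iff₀ ha'0] at h; linarith [h]
  have : (b' : ℤ) ≤ ⌊(a' : ℝ) * r⌋ := Int.le_floor.mpr (by exact_mod_cast hb.le)
  unfold ff
  gcongr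
  exact_mod_cast this

lemma step (r : ℝ) (K : ℕ) (hK : 1 ≤ K) (c : ℝ)
    (hc : ∀ d : ℕ, 1 ≤ d → d ≤ K → c ≤ 1 - Int.fract ((d : ℝ) * r))
    (m : ℕ) (hm : 1 ≤ m) :
    ∃ a : ℕ, 1 ≤ a ∧ ff r m ≤ ff r a ∧ (∀ d : ℕ, 1 ≤ d → d ≤ m + K → ff r d ≤ ff r a) ∧
      (a ≤ m ∨ Int.fract ((a : ℝ) * r) ≤ Int.fract ((m : ℝ) * r) - c) := by
  classical
  set S := Finset.Icc 1 (m + K) with hSdef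
  have hS : S.Nonempty := ⟨1, by simp [hSdef]; omega⟩
  set M := S.sup' hS (ff r) with hMdef
  set T := S.filter (fun d => ff r d = M) with hTdef
  have hT : T.Nonempty := by
    obtain ⟨b, hb, hbe⟩ := Finset.exists_mem_eq_sup' hS (ff r)
    exact ⟨b, by simp [hTdef, hb, hbe.symm]; rfl⟩
  set a := T.min' hT with hadef
  have haT : a ∈ T := T.min'_mem hT
  have haS : a ∈ S := (Finset.mem_filter.mp haT).1
  have hafa : ff r a = M := (Finset.mem_filter.mp haT).2
  have ha1 : 1 ≤ a := (Finset.mem_Icc.mp haS).1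
  have haK : a ≤ m + K := (Finset.mem_Icc.mp haS).2
  have hmax : ∀ d : ℕ, 1 ≤ d → d ≤ m + K → ff r d ≤ ff r a := by
    intro d h1 h2
    rw [hafa]
    exact Finset.le_sup' (ff r) (Finset.mem_Icc.mpr ⟨h1, h2⟩)
  have hfm : ff r m ≤ ff r a := hmax m hm (by omega)
  refine ⟨a, ha1, hfm, hmax, ?_⟩
  by_cases ham : a ≤ m
  · exact Or.inl ham
  · right
    push_neg at ham
    -- m < a
    have hfmlt : ff r m < ff r a := by
      rcases lt_or_eq_of_le hfm with h | h
      · exact h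
      · exfalso
        have hmT : m ∈ T := by
          simp only [hTdef, Finset.mem_filter]
          exact ⟨Finset.mem_Icc.mpr ⟨hm, by omega⟩, by rw [h, hafa]⟩
        have := T.min'_le m hmT
        omega
    set b := ⌊(a : ℝ) * r⌋ with hbdef
    set bm := ⌊(m : ℝ) * r⌋ with hbmdef
    set d := a - m with hddef
    have hd1 : 1 ≤ d := by omega
    have hdK : d ≤ K := by omega
    have ha0 : (0:ℝ) < a := by exact_mod_cast ha1
    have hm0 : (0:ℝ) < m := by exact_mod_cast hm
    have hd0 : (0:ℝ) < d := by exact_mod_cast hd1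
    have hba : bm * a + 1 ≤ b * m := by
      have := (div_lt_div_iff₀ hm0 ha0).mp hfmlt
      have : (bm : ℝ) * a < b * m := by exact_mod_cast this
      exact_mod_cast Int.add_one_le_iff.mpr (by exact_mod_cast this)
    have hclaim : ⌊(d : ℝ) * r⌋ + 1 ≤ b - bm := by
      by_contra hcon
      push_neg at hcon
      have hle : b - bm ≤ ⌊(d : ℝ) * r⌋ := by omega
      have h1 : (b : ℝ) / a < ((b - bm : ℤ) : ℝ) / d := by
        rw [div_lt_div_iff₀ ha0 hd0]
        have hcast : (d : ℝ) = (a : ℝ) - m := by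
          have : (d : ℕ) + m = a := by omega
          push_cast [← this]; ring
        rw [hcast]
        have : (b : ℝ) * m ≥ (bm : ℝ) * a + 1 := by exact_mod_cast hba
        push_cast
        nlinarith
      have h2 : ((b - bm : ℤ) : ℝ) / d ≤ ff r d := by
        unfold ff
        gcongr
      have h3 : ff r d ≤ ff r a := hmax d hd1 (by omega)
      have : ff r a = (b : ℝ) / a := rfl
      linarith [h1, h2, h3]
    -- now fract inequality
    have hcd := hc d hd1 hdK
    have hacast : (a : ℝ) = (m : ℝ) + d := by
      have : m + d = a := by omega
      push_cast [← this]; ring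
    have hbcast : ((bm : ℝ) + ⌊(d : ℝ) * r⌋ + 1) ≤ (b : ℝ) := by
      have h' : ((⌊(d : ℝ) * r⌋ : ℝ)) + 1 ≤ (b : ℝ) - bm := by exact_mod_cast hclaim
      linarith
    have e1 : Int.fract ((a : ℝ) * r) = (a : ℝ) * r - b := by rw [Int.fract]
    have e2 : Int.fract ((m : ℝ) * r) = (m : ℝ) * r - bm := by rw [Int.fract]
    have e3 : Int.fract ((d : ℝ) * r) = (d : ℝ) * r - ⌊(d : ℝ) * r⌋ := by rw [Int.fract]
    rw [e1, e2]
    rw [e3] at hcd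
    have har : (a : ℝ) * r = (m : ℝ) * r + (d : ℝ) * r := by rw [hacast]; ring
    linarith [hbcast, hcd]

lemma key (r : ℝ) (K : ℕ) (hK : 1 ≤ K) (c : ℝ)
    (hc : ∀ d : ℕ, 1 ≤ d → d ≤ K → c ≤ 1 - Int.fract ((d : ℝ) * r)) :
    ∀ n : ℕ, ∀ m : ℕ, 1 ≤ m → Int.fract ((m : ℝ) * r) < ((n : ℝ) + 1) * c →
      ∃ a : ℕ, 1 ≤ a ∧ ff r m ≤ ff r a ∧
        ∀ d : ℕ, 1 ≤ d → d ≤ a + K → ff r d ≤ ff r a := by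
  intro n
  induction n with
  | zero =>
    intro m hm hfr
    obtain ⟨a, ha1, hfm, hmax, hcase⟩ := step r K hK c hc m hm
    rcases hcase with h | h
    · exact ⟨a, ha1, hfm, fun d h1 h2 => hmax d h1 (by omega)⟩
    · exfalso
      have := Int.fract_nonneg ((a : ℝ) * r)
      norm_num at hfr
      linarith
  | succ n ih =>
    intro m hm hfr
    obtain ⟨a, ha1, hfm, hmax, hcase⟩ := step r K hK c hc m hm
    rcases hcase with h | h
    · exact ⟨a, ha1, hfm, fun d h1 h2 => hmax d h1 (by omega)⟩
    · have hfr' : Int.fract ((a : ℝ) * r) < ((n : ℝ) + 1) * c := by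
        push_cast at hfr ⊢
        linarith
      obtain ⟨a', h1, h2, h3⟩ := ih a ha1 hfr'
      exact ⟨a', h1, hfm.trans h2, h3⟩

/-- Proposition 5.2 (arithmetic form). -/
theorem stmt_9 (p q : ℤ) (hp : 0 < p) (hq : 0 < q) (r : ℝ) (hr : 0 < r)
    (hirr : Irrational r) (k : ℕ) (ε : ℝ) (hε : 0 < ε) :
    ∃ a b : ℕ, 1 ≤ a ∧ r - ε < (b : ℝ) / (a : ℝ) ∧ (b : ℝ) / (a : ℝ) < r ∧
      ∀ a' b' : ℕ, 1 ≤ a' → (b : ℝ) / (a : ℝ) < (b' : ℝ) / (a' : ℝ) →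
        (b' : ℝ) / (a' : ℝ) < r →
        (a' : ℤ) * p + (b' : ℤ) * q > (a : ℤ) * p + (b : ℤ) * q + (k : ℤ) := by
  classical
  set K := k + 1 with hKdef
  have hK : 1 ≤ K := by omega
  have hSne : (Finset.Icc 1 K).Nonempty := ⟨1, by simp [hK]⟩
  set c := (Finset.Icc 1 K).inf' hSne (fun d => 1 - Int.fract ((d : ℝ) * r)) with hcdef
  have hc : ∀ d : ℕ, 1 ≤ d → d ≤ K → c ≤ 1 - Int.fract ((d : ℝ) * r) := by
    intro d h1 h2
    exact Finset.inf'_le _ (Finset.mem_Icc.mpr ⟨h1, h2⟩)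
  have hcpos : 0 < c := by
    rw [hcdef, Finset.lt_inf'_iff]
    intro d _
    have := Int.fract_lt_one ((d : ℝ) * r)
    linarith
  -- initial rational below r
  have hmaxlt : max (r - ε) 0 < r := max_lt (by linarith) hr
  obtain ⟨q₀, hq₀1, hq₀2⟩ := exists_rat_btwn hmaxlt
  have hq₀pos : (0 : ℝ) < (q₀ : ℝ) := lt_of_le_of_lt (le_max_right _ _) hq₀1
  set m₀ := q₀.den with hm₀def
  have hm₀ : 1 ≤ m₀ := q₀.pos
  set b₀ := q₀.num.toNat with hb₀def
  have hq₀num : (0 : ℤ) ≤ q₀.num := by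
    have h : (0 : ℚ) < q₀ := by exact_mod_cast hq₀pos
    exact Rat.num_nonneg.mpr h.le
  have hb₀cast : ((b₀ : ℤ) : ℝ) = (q₀.num : ℝ) := by
    rw [hb₀def]; exact_mod_cast Int.toNat_of_nonneg hq₀num
  have hq₀eq : (q₀ : ℝ) = (b₀ : ℝ) / (m₀ : ℝ) := by
    rw [Rat.cast_def]
    push_cast at hb₀cast ⊢
    rw [hb₀cast]
  have hffm₀ : (q₀ : ℝ) ≤ ff r m₀ := by
    rw [hq₀eq]
    exact ff_ge r hm₀ (hq₀eq ▸ hq₀2)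
  -- choose n
  obtain ⟨n, hn⟩ := exists_nat_gt (1 / c)
  have hfrac : Int.fract ((m₀ : ℝ) * r) < ((n : ℝ) + 1) * c := by
    have h1 : (1 : ℝ) < n * c := by
      rw [div_lt_iff₀ hcpos] at hn
      linarith
    have := Int.fract_lt_one ((m₀ : ℝ) * r)
    nlinarith
  obtain ⟨a, ha1, hfma, hmax⟩ := key r K hK c hc n m₀ hm₀ hfrac
  have ha0 : (0 : ℝ) < (a : ℝ) := by exact_mod_cast ha1
  have hfl0 : (0 : ℤ) ≤ ⌊(a : ℝ) * r⌋ := Int.floor_nonneg.mpr (by positivity)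
  set b := (⌊(a : ℝ) * r⌋).toNat with hbdef
  have hbZ : ((b : ℕ) : ℤ) = ⌊(a : ℝ) * r⌋ := Int.toNat_of_nonneg hfl0
  have hbR : ((b : ℕ) : ℝ) = ((⌊(a : ℝ) * r⌋ : ℤ) : ℝ) := by exact_mod_cast hbZ
  have hfa_eq : ff r a = (b : ℝ) / (a : ℝ) := by rw [ff, hbR]
  refine ⟨a, b, ha1, ?_, ?_, ?_⟩
  · have : r - ε ≤ max (r - ε) 0 := le_max_left _ _
    have h2 : (q₀ : ℝ) ≤ (b : ℝ) / (a : ℝ) := by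
      rw [← hfa_eq]; exact hffm₀.trans hfma
    linarith
  · -- b/a < r
    have hlt : ((⌊(a : ℝ) * r⌋ : ℤ) : ℝ) < (a : ℝ) * r := by
      have hle := Int.floor_le ((a : ℝ) * r)
      have hne : (a : ℝ) * r ≠ ((⌊(a : ℝ) * r⌋ : ℤ) : ℝ) :=
        (hirr.natCast_mul (by omega : a ≠ 0)).ne_int _
      exact lt_of_le_of_ne hle (fun h => hne h.symm)
    rw [div_lt_iff₀ ha0, hbR]
    linarith
  · intro a' b' ha'1 hlt1 hlt2
    have ha'0 : (0 : ℝ) < (a' : ℝ) := by exact_mod_cast ha'1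
    -- a' > a + K
    have ha'big : a + K < a' := by
      by_contra hcon
      push_neg at hcon
      have h1 : (b' : ℝ) / (a' : ℝ) ≤ ff r a' := ff_ge r ha'1 hlt2
      have h2 : ff r a' ≤ ff r a := hmax a' ha'1 hcon
      rw [hfa_eq] at h2
      linarith
    -- integer inequality
    have hI : (b : ℤ) * a' + 1 ≤ (b' : ℤ) * a := by
      rw [div_lt_div_iff₀ ha0 ha'0] at hlt1
      have : (b : ℤ) * a' < (b' : ℤ) * a := by exact_mod_cast hlt1
      omega
    have haa' : (a : ℤ) + k + 2 ≤ (a' : ℤ) := by exact_mod_cast (by omega : a + k + 2 ≤ a')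
    have hb0 : (0 : ℤ) ≤ (b : ℤ) := Int.ofNat_nonneg b
    have haZ : (1 : ℤ) ≤ (a : ℤ) := by exact_mod_cast ha1
    have hgoal : (a : ℤ) * ((a' : ℤ) * p + (b' : ℤ) * q) >
        (a : ℤ) * ((a : ℤ) * p + (b : ℤ) * q + (k : ℤ)) := by
      have h1 : ((b : ℤ) * a' + 1) * q ≤ (b' : ℤ) * a * q :=
        mul_le_mul_of_nonneg_right hI hq.le
      have hW : (0 : ℤ) ≤ (a : ℤ) * p + (b : ℤ) * q := by positivity
      have h2 : ((a : ℤ) + k + 2) * ((a : ℤ) * p + (b : ℤ) * q) ≤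
          (a' : ℤ) * ((a : ℤ) * p + (b : ℤ) * q) :=
        mul_le_mul_of_nonneg_right haa' hW
      have h3 : (a : ℤ) ≤ (a : ℤ) * p + (b : ℤ) * q := by nlinarith
      have hk0 : (0 : ℤ) ≤ (k : ℤ) := Int.ofNat_nonneg k
      nlinarith [h1, h2, h3, hk0, haZ]
    exact lt_of_mul_lt_mul_left hgoal (by linarith)
end
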